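/- Drift over a pair of phases AM+OI. Consider the MMAHH with acceptance operators OI and AM on f = OneMax, with p, q ∈ (0,1), started from an arbitrary x_0 ∈ L_i with i ∈ [0..n] and s_0 = AM. Setting Δ_i = (2i − n)/(2 + q(n − 2)), one has E[y_0 − y_{T_s^{(2)}}] = Δ_i + (i − Δ_i)/(1 + p(n − 1)); that is, the drift over a phase of AM followed by a phase of OI is obtained by plugging the average position i − Δ_i after the AM phase into the affine OI-phase drift z ↦ z/(1 + p(n − 1)). -/

import Mathlib

open MeasureTheory
open scoped ENNReal NNReal

namespace MMAHHStmt

/-- The two acceptance operators. -/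
inductive Op : Type
  | OI : Op
  | AM : Op
  deriving DecidableEq

instance : MeasurableSpace Op := ⊤

/-- Search points: bit-strings of length `n`. -/
abbrev Point (n : ℕ) := Fin n → Bool

/-- The number of one-bits of a bit-string. -/
def ones {n : ℕ} (x : Point n) : ℕ := (Finset.univ.filter fun i => x i = true).card

/-- The all-ones string, the global optimum of all benchmarks considered. -/
def optimum (n : ℕ) : Point n := fun _ => true

/-- Flipping the bit in position `v`. -/
def flipBit {n : ℕ} (x : Point n) (v : Fin n) : Point n := Function.update x v (!(x v))

open Classical in
/-- The search point obtained from `x` by proposing to flip bit `v` and applying the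
acceptance operator `op` for the objective function `f`. -/
noncomputable def movedPoint {n : ℕ} (f : Point n → ℝ) (op : Op) (x : Point n) (v : Fin n) :
    Point n :=
  match op with
  | Op.OI => if f x < f (flipBit x v) then flipBit x v else x
  | Op.AM => flipBit x v

open Classical in
/-- One-step transition probability of the search point under acceptance operator `op`:
a uniformly random bit is flipped and the move is accepted or rejected according to `op`. -/
noncomputable def moveProb {n : ℕ} (f : Point n → ℝ) (op : Op) (x x' : Point n) : ℝ≥0∞ :=
  ((Finset.univ.filter fun v => movedPoint f op x v = x').card : ℝ≥0∞) / n

/-- Transition probabilities of the two-state Markov chain on the acceptance operators. -/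
noncomputable def switchProb (p q : ℝ) : Op → Op → ℝ≥0∞
  | Op.OI, Op.OI => ENNReal.ofReal (1 - p)
  | Op.OI, Op.AM => ENNReal.ofReal p
  | Op.AM, Op.OI => ENNReal.ofReal q
  | Op.AM, Op.AM => ENNReal.ofReal (1 - q)

/-- One-step transition probabilities of the MMAHH on the state space
`Point n × Op`: the search point moves according to the current acceptance operator, and,
independently, the operator switches according to the two-state Markov chain. -/
noncomputable def mmahhTrans {n : ℕ} (f : Point n → ℝ) (p q : ℝ) :
    Point n × Op → Point n × Op → ℝ≥0∞ :=
  fun s s' => moveProb f s.2 s.1 s'.1 * switchProb p q s.2 s'.2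

/-- `X` is (a version of) the MMAHH Markov chain with objective function `f` and switching
probabilities `p` and `q`, under the measure `μ`: each `X t` is measurable, and conditionally
on any history, the next state is distributed according to `mmahhTrans`. -/
def IsMMAHH {n : ℕ} {Ω : Type*} [MeasurableSpace Ω] (μ : Measure Ω)
    (X : ℕ → Ω → Point n × Op) (f : Point n → ℝ) (p q : ℝ) : Prop :=
  (∀ t, Measurable (X t)) ∧
  ∀ (t : ℕ) (σ : ℕ → Point n × Op) (s' : Point n × Op),
    μ {ω | (∀ i ≤ t, X i ω = σ i) ∧ X (t + 1) ω = s'}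
      = μ {ω | ∀ i ≤ t, X i ω = σ i} * mmahhTrans f p q (σ t) s'

/-- The runtime: the first hitting time of the global optimum, as an extended natural number
(`⊤` if the optimum is never reached). -/
noncomputable def hitTime {n : ℕ} {Ω : Type*} (X : ℕ → Ω → Point n × Op) (ω : Ω) : ℕ∞ :=
  ⨅ t ∈ {t : ℕ | (X t ω).1 = optimum n}, (t : ℕ∞)

/-- The `k`-th switching time between the two acceptance operators (with junk value given by
`Nat.sInf ∅ = 0` on the probability-zero event that no further switch occurs). -/
noncomputable def switchTime {n : ℕ} {Ω : Type*} (X : ℕ → Ω → Point n × Op) : ℕ → Ω → ℕ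
  | 0, _ => 0
  | k + 1, ω =>
      sInf {t : ℕ | switchTime X k ω ≤ t ∧ (X t ω).2 ≠ (X (switchTime X k ω) ω).2}

/-- The OneMax benchmark. -/
noncomputable def OneMax (n : ℕ) (x : Point n) : ℝ := (ones x : ℝ)

/-! ### Auxiliary material -/

section Aux

open Finset

variable {n : ℕ}

instance : Fintype Op := ⟨{Op.OI, Op.AM}, fun x => by cases x <;> simp⟩

instance : MeasurableSingletonClass Op := ⟨fun _ => MeasurableSpace.measurableSet_top⟩

/-- real-valued "distance to optimum" -/
noncomputable def yR (x : Point n) : ℝ := (n : ℝ) - (ones x : ℝ)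

lemma ones_le (x : Point n) : ones x ≤ n := by
  classical
  calc (Finset.univ.filter fun i => x i = true).card ≤ (Finset.univ : Finset (Fin n)).card :=
        Finset.card_filter_le _ _
    _ = n := by simp

lemma ones_cast_eq (x : Point n) : (ones x : ℝ) = ∑ j, (if x j = true then (1:ℝ) else 0) := by
  classical
  rw [ones, Finset.card_filter]
  push_cast
  rfl

lemma ones_flip (x : Point n) (v : Fin n) :
    (ones (flipBit x v) : ℝ) = (ones x : ℝ) + (if x v then -1 else 1) := by
  classical
  rw [ones_cast_eq, ones_cast_eq]
  have h1 : ∀ j, (if (flipBit x v) j = true then (1:ℝ) else 0)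
      = Function.update (fun j => if x j = true then (1:ℝ) else 0) v
          (if !(x v) then (1:ℝ) else 0) j := by
    intro j
    rcases eq_or_ne j v with rfl | hj
    · simp [flipBit]
    · simp [flipBit, Function.update_of_ne hj]
  rw [Finset.sum_congr rfl fun j _ => h1 j,
    Finset.sum_update_of_mem (Finset.mem_univ v)]
  have h2 : ∑ j, (if x j = true then (1:ℝ) else 0)
      = (if x v = true then (1:ℝ) else 0)
        + ∑ j ∈ Finset.univ \ {v}, (if x j = true then (1:ℝ) else 0) := by
    rw [Finset.sum_eq_add_sum_sdiff_singleton_of_mem (Finset.mem_univ v)]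
  rw [h2]
  cases h : x v <;> simp [h] <;> ring

lemma yR_flip (x : Point n) (v : Fin n) :
    yR (flipBit x v) = yR x + (if x v then 1 else -1) := by
  unfold yR
  rw [ones_flip]
  cases h : x v <;> simp <;> ring

lemma yR_nonneg (x : Point n) : 0 ≤ yR x := by
  have := ones_le x
  unfold yR
  have : (ones x : ℝ) ≤ n := by exact_mod_cast this
  linarith

lemma yR_le (x : Point n) : yR x ≤ n := by
  unfold yR
  have : (0:ℝ) ≤ (ones x : ℝ) := by positivity
  linarith

lemma movedPoint_AM (x : Point n) (v : Fin n) :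
    movedPoint (OneMax n) Op.AM x v = flipBit x v := rfl

lemma movedPoint_OI (x : Point n) (v : Fin n) :
    movedPoint (OneMax n) Op.OI x v = if x v = true then x else flipBit x v := by
  have h : (ones (flipBit x v) : ℝ) = (ones x : ℝ) + (if x v then -1 else 1) := ones_flip x v
  cases hv : x v
  · have : OneMax n x < OneMax n (flipBit x v) := by
      unfold OneMax; rw [h, hv]; simp
    simp [movedPoint, this, hv]
  · have : ¬ OneMax n x < OneMax n (flipBit x v) := by
      unfold OneMax; rw [h, hv]; simp
    simp [movedPoint, this, hv]

open Classical in
/-- Real-valued transition kernel of the search point under operator `op` for `OneMax`. -/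
noncomputable def K (n : ℕ) (op : Op) (x x' : Point n) : ℝ :=
  ((Finset.univ.filter fun v => movedPoint (OneMax n) op x v = x').card : ℝ) / n

lemma sum_K_mul (op : Op) (x : Point n) (g : Point n → ℝ) :
    ∑ x', K n op x x' * g x' = (∑ v, g (movedPoint (OneMax n) op x v)) / n := by
  classical
  have hK : ∀ x' : Point n, K n op x x' * g x'
      = (((Finset.univ.filter fun v => movedPoint (OneMax n) op x v = x').card : ℝ) * g x') / n := by
    intro x'; rw [K, div_mul_eq_mul_div]
  rw [Finset.sum_congr rfl fun x' _ => hK x', ← Finset.sum_div]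
  congr 1
  have : ∀ x' : Point n,
      ((Finset.univ.filter fun v => movedPoint (OneMax n) op x v = x').card : ℝ) * g x'
        = ∑ v ∈ Finset.univ.filter fun v => movedPoint (OneMax n) op x v = x',
            g (movedPoint (OneMax n) op x v) := by
    intro x'
    rw [Finset.sum_congr rfl (fun v hv => by
      rw [(Finset.mem_filter.1 hv).2])]
    simp [mul_comm]
  rw [Finset.sum_congr rfl fun x' _ => this x']
  exact Finset.sum_fiberwise_of_maps_to (fun v _ => Finset.mem_univ _) _

lemma sum_K_one (hn : 0 < n) (op : Op) (x : Point n) :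
    ∑ x', K n op x x' = 1 := by
  have h := sum_K_mul (n := n) op x (fun _ => (1:ℝ))
  simp only [mul_one] at h
  rw [h, Finset.sum_const, Finset.card_univ, Fintype.card_fin, nsmul_eq_mul, mul_one]
  exact div_self (by positivity)

lemma step_AM (hn : 0 < n) (α β : ℝ) (x : Point n) :
    ∑ x', K n Op.AM x x' * (α * yR x' + β) = α * (1 - 2/(n:ℝ)) * yR x + (α + β) := by
  have hn' : (n:ℝ) ≠ 0 := by positivity
  rw [sum_K_mul]
  have h1 : ∀ v : Fin n, α * yR (movedPoint (OneMax n) Op.AM x v) + β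
      = (α * yR x + β) + α * (if x v then 1 else -1) := by
    intro v
    rw [movedPoint_AM, yR_flip]; ring
  rw [Finset.sum_congr rfl fun v _ => h1 v, Finset.sum_add_distrib]
  have h2 : ∑ v : Fin n, α * (if x v then (1:ℝ) else -1)
      = α * (2 * (ones x : ℝ) - n) := by
    rw [← Finset.mul_sum]
    congr 1
    have : ∀ v : Fin n, (if x v then (1:ℝ) else -1)
        = 2 * (if x v = true then (1:ℝ) else 0) - 1 := by
      intro v; cases h : x v <;> simp [h] <;> norm_num
    rw [Finset.sum_congr rfl fun v _ => this v]
    rw [Finset.sum_sub_distrib, ← Finset.mul_sum, ← ones_cast_eq]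
    simp
  rw [h2, Finset.sum_const]
  have hy : (ones x : ℝ) = (n : ℝ) - yR x := by unfold yR; ring
  rw [hy]
  simp only [Finset.card_univ, Fintype.card_fin, nsmul_eq_mul]
  field_simp
  ring

lemma step_OI (hn : 0 < n) (α β : ℝ) (x : Point n) :
    ∑ x', K n Op.OI x x' * (α * yR x' + β) = α * (1 - 1/(n:ℝ)) * yR x + β := by
  have hn' : (n:ℝ) ≠ 0 := by positivity
  rw [sum_K_mul]
  have h1 : ∀ v : Fin n, α * yR (movedPoint (OneMax n) Op.OI x v) + β
      = (α * yR x + β) - α * (if x v = true then 0 else 1) := by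
    intro v
    rw [movedPoint_OI]
    cases h : x v
    · simp only [Bool.false_eq_true, if_false]
      rw [yR_flip, h]
      simp
      ring
    · simp
  rw [Finset.sum_congr rfl fun v _ => h1 v, Finset.sum_sub_distrib]
  have h2 : ∑ v : Fin n, α * (if x v = true then (0:ℝ) else 1)
      = α * ((n:ℝ) - (ones x : ℝ)) := by
    rw [← Finset.mul_sum]
    congr 1
    have : ∀ v : Fin n, (if x v = true then (0:ℝ) else 1)
        = 1 - (if x v = true then (1:ℝ) else 0) := by
      intro v; cases h : x v <;> simp [h]
    rw [Finset.sum_congr rfl fun v _ => this v, Finset.sum_sub_distrib, ← ones_cast_eq]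
    simp
  rw [h2, Finset.sum_const]
  have hy : (ones x : ℝ) = (n : ℝ) - yR x := by unfold yR; ring
  rw [hy]
  simp only [Finset.card_univ, Fintype.card_fin, nsmul_eq_mul]
  field_simp
  ring

end Aux
section Aux2

open Finset

variable {n : ℕ}

/-- Iterated kernel applied to a function. -/
noncomputable def W (n : ℕ) : List Op → (Point n → ℝ) → Point n → ℝ
  | [], g => g
  | op :: l, g => fun x => ∑ x', K n op x x' * W n l g x'

lemma W_const (hn : 0 < n) (l : List Op) (c : ℝ) :
    W n l (fun _ => c) = fun _ => c := by
  induction l with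
  | nil => rfl
  | cons op l ih =>
    funext x
    show ∑ x', K n op x x' * W n l (fun _ => c) x' = c
    rw [ih]
    rw [← Finset.sum_mul, sum_K_one hn, one_mul]

lemma W_OI_rep (hn : 0 < n) (b : ℕ) (α β : ℝ) :
    W n (List.replicate b Op.OI) (fun x => α * yR x + β)
      = fun x => α * (1 - 1/(n:ℝ))^b * yR x + β := by
  induction b with
  | zero => simp [W]
  | succ b ih =>
    funext x
    rw [List.replicate_succ]
    show ∑ x', K n Op.OI x x' * W n (List.replicate b Op.OI) (fun x => α * yR x + β) x'
      = α * (1 - 1/(n:ℝ))^(b+1) * yR x + β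
    rw [ih]
    have := step_OI hn (α * (1 - 1/(n:ℝ))^b) β x
    rw [this]
    ring

lemma W_AM_rep (hn : 0 < n) (a : ℕ) (α β : ℝ) :
    W n (List.replicate a Op.AM) (fun x => α * yR x + β)
      = fun x => α * (1 - 2/(n:ℝ))^a * yR x
          + (α * (1 - (1 - 2/(n:ℝ))^a) * ((n:ℝ)/2) + β) := by
  have hn' : (n:ℝ) ≠ 0 := by positivity
  induction a with
  | zero => funext x; simp [W]
  | succ a ih =>
    funext x
    rw [List.replicate_succ]
    show ∑ x', K n Op.AM x x' * W n (List.replicate a Op.AM) (fun x => α * yR x + β) x'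
      = _
    rw [ih]
    have := step_AM hn (α * (1 - 2/(n:ℝ))^a)
      (α * (1 - (1 - 2/(n:ℝ))^a) * ((n:ℝ)/2) + β) x
    rw [this]
    rw [pow_succ]
    field_simp
    ring

lemma W_append (l l' : List Op) (g : Point n → ℝ) :
    W n (l ++ l') g = W n l (W n l' g) := by
  induction l with
  | nil => rfl
  | cons op l ih =>
    funext x
    rw [List.cons_append]
    show ∑ x', K n op x x' * W n (l ++ l') g x'
      = ∑ x', K n op x x' * W n l (W n l' g) x'
    rw [ih]

/-- The trajectory sum identity. -/
lemma traj_sum (m : ℕ) (ops : Fin m → Op) (g : Point n → ℝ) (x : Point n) :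
    ∑ pts : Fin (m+1) → Point n,
      (if pts 0 = x then
        (∏ t : Fin m, K n (ops t) (pts t.castSucc) (pts t.succ)) * g (pts (Fin.last m))
       else 0)
      = W n (List.ofFn ops) g x := by
  classical
  induction m generalizing x with
  | zero =>
    have hofn : List.ofFn ops = [] := by simp
    refine Eq.trans (Fintype.sum_equiv (Equiv.funUnique (Fin 1) (Point n)) _
      (fun y => if y = x then g y else 0) (fun pts => ?_)) ?_
    · have h0 : (pts : Fin 1 → Point n) default = pts 0 := rfl
      simp [Fin.last]
    · rw [Finset.sum_ite_eq' Finset.univ x g, hofn]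
      simp [W]
  | succ m ih =>
    rw [← Fintype.sum_bijective
      (fun yr : Point n × (Fin (m+1) → Point n) => (Fin.cons yr.1 yr.2 : Fin (m+2) → Point n))
      (Fin.consEquiv (fun _ : Fin (m+2) => Point n)).bijective _ _ (fun yr => rfl)]
    rw [Fintype.sum_prod_type]
    rw [Finset.sum_eq_single_of_mem x (Finset.mem_univ x) (fun y _ hy => by
      rw [Finset.sum_eq_zero]
      intro r _
      rw [if_neg (by simpa [Fin.cons_zero] using hy)])]
    have hofn : List.ofFn ops = ops 0 :: List.ofFn (fun j : Fin m => ops j.succ) :=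
      List.ofFn_succ
    rw [hofn]
    show _ = ∑ x', K n (ops 0) x x' * W n (List.ofFn fun j : Fin m => ops j.succ) g x'
    have hR : ∑ x', K n (ops 0) x x' * W n (List.ofFn fun j : Fin m => ops j.succ) g x'
        = ∑ r : Fin (m+1) → Point n, K n (ops 0) x (r 0) *
            ((∏ t : Fin m, K n (ops t.succ) (r t.castSucc) (r t.succ)) * g (r (Fin.last m))) := by
      rw [Finset.sum_congr rfl (fun x' _ => by
        rw [← ih (fun j => ops j.succ) x', Finset.mul_sum])]
      rw [Finset.sum_comm]
      refine Finset.sum_congr rfl (fun r _ => ?_)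
      simp only [mul_ite, mul_zero]
      rw [Finset.sum_ite_eq]
      simp
    rw [hR]
    refine Finset.sum_congr rfl (fun r _ => ?_)
    rw [if_pos (Fin.cons_zero _ _), Fin.prod_univ_succ, ← Fin.succ_last]
    simp only [← Fin.succ_castSucc, Fin.cons_succ, Fin.castSucc_zero, Fin.cons_zero]
    ring

end Aux2
section Aux3

open Finset

variable {n : ℕ}

/-- Real-valued switching matrix. -/
def rsw (p q : ℝ) : Op → Op → ℝ
  | Op.OI, Op.OI => 1 - p
  | Op.OI, Op.AM => p
  | Op.AM, Op.OI => q
  | Op.AM, Op.AM => 1 - q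

/-- The canonical operator pattern: `a` AM's, then OI's up to time `m-1`, then AM at `m`. -/
def opsPN (a m : ℕ) : ℕ → Op := fun j => if j < a then Op.AM else if j < m then Op.OI else Op.AM

/-- Two-switch pattern for an operator sequence: first switch at `a`, second at `m`. -/
def PatN (s : ℕ → Op) (a m : ℕ) : Prop :=
  0 < a ∧ a < m ∧ (∀ t, t < a → s t = s 0) ∧ s a ≠ s 0 ∧
    (∀ t, a ≤ t → t < m → s t = s a) ∧ s m ≠ s a

lemma op_cases (o : Op) : o = Op.OI ∨ o = Op.AM := by cases o <;> simp

lemma op_ne_AM {o : Op} (h : o ≠ Op.AM) : o = Op.OI := by cases o <;> simp_all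

lemma op_ne_OI {o : Op} (h : o ≠ Op.OI) : o = Op.AM := by cases o <;> simp_all

lemma patN_opsPN {a b : ℕ} (ha : 0 < a) (hb : 0 < b) :
    PatN (opsPN a (a + b)) a (a + b) := by
  unfold PatN opsPN
  refine ⟨ha, by omega, fun t ht => ?_, ?_, fun t ht1 ht2 => ?_, ?_⟩
  · simp [ht, ha]
  · simp [ha, show ¬ a < a by omega, show a < a + b by omega]
  · simp [ha, show ¬ a < a by omega, show a < a + b by omega,
      show ¬ t < a by omega, ht2]
  · simp [ha, show ¬ a < a by omega, show a < a + b by omega,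
      show ¬ a + b < a by omega, show ¬ a + b < a + b by omega]

lemma patN_unique {s : ℕ → Op} {a m a' m'} (h : PatN s a m) (h' : PatN s a' m') :
    a = a' ∧ m = m' := by
  obtain ⟨ha, ham, h1, h2, h3, h4⟩ := h
  obtain ⟨ha', ham', h1', h2', h3', h4'⟩ := h'
  have haa : a = a' := by
    rcases lt_trichotomy a a' with hl | he | hl
    · exact absurd (h1' a hl) h2
    · exact he
    · exact absurd (h1 a' hl) h2'
  subst haa
  refine ⟨rfl, ?_⟩
  rcases lt_trichotomy m m' with hl | he | hl
  · exact absurd (h3' m (le_of_lt ham) hl) h4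
  · exact he
  · exact absurd (h3 m' (le_of_lt ham') hl) h4'

lemma patN_congr {s s' : ℕ → Op} {a m : ℕ} (hag : ∀ t ≤ m, s t = s' t)
    (h : PatN s a m) : PatN s' a m := by
  obtain ⟨ha, ham, h1, h2, h3, h4⟩ := h
  have h0 : s 0 = s' 0 := hag 0 (by omega)
  have hA : s a = s' a := hag a (by omega)
  have hM : s m = s' m := hag m le_rfl
  exact ⟨ha, ham, fun t ht => by rw [← hag t (by omega), ← h0, h1 t ht],
    by rw [← h0, ← hA]; exact h2,
    fun t ht1 ht2 => by rw [← hag t (by omega), ← hA, h3 t ht1 ht2],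
    by rw [← hM, ← hA]; exact h4⟩

/-- If a pattern holds and the sequence starts at `AM`, it must be the canonical pattern. -/
lemma patN_eq_opsPN {s : ℕ → Op} {a m : ℕ} (h : PatN s a m) (h0 : s 0 = Op.AM) :
    ∀ t ≤ m, s t = opsPN a m t := by
  obtain ⟨ha, ham, h1, h2, h3, h4⟩ := h
  have hsa : s a = Op.OI := op_ne_AM (by rw [← h0] at *; exact h2)
  intro t ht
  unfold opsPN
  rcases lt_or_ge t a with hlt | hge
  · rw [h1 t hlt, h0, if_pos hlt]
  · rcases lt_or_ge t m with hlt2 | hge2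
    · rw [h3 t hge hlt2, hsa, if_neg (by omega), if_pos hlt2]
    · have : t = m := by omega
      subst this
      rw [if_neg (by omega), if_neg (by omega)]
      exact op_ne_OI (by rw [← hsa]; exact h4)

lemma swprod (p q : ℝ) {a b : ℕ} (ha : 0 < a) (hb : 0 < b) :
    ∏ t ∈ Finset.range (a + b), rsw p q (opsPN a (a + b) t) (opsPN a (a + b) (t + 1))
      = (1 - q)^(a - 1) * q * ((1 - p)^(b - 1) * p) := by
  obtain ⟨a', rfl⟩ : ∃ a', a = a' + 1 := ⟨a - 1, by omega⟩
  obtain ⟨b', rfl⟩ : ∃ b', b = b' + 1 := ⟨b - 1, by omega⟩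
  rw [Finset.prod_range_add]
  have h1 : ∏ t ∈ Finset.range (a' + 1),
      rsw p q (opsPN (a' + 1) (a' + 1 + (b' + 1)) t) (opsPN (a' + 1) (a' + 1 + (b' + 1)) (t + 1))
      = (1 - q)^a' * q := by
    rw [Finset.prod_range_succ]
    have e1 : ∀ t ∈ Finset.range a',
        rsw p q (opsPN (a' + 1) (a' + 1 + (b' + 1)) t) (opsPN (a' + 1) (a' + 1 + (b' + 1)) (t + 1))
          = 1 - q := by
      intro t ht
      rw [Finset.mem_range] at ht
      unfold opsPN
      rw [if_pos (by omega), if_pos (by omega)]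
      rfl
    rw [Finset.prod_congr rfl e1, Finset.prod_const]
    unfold opsPN
    rw [if_pos (by omega), if_neg (by omega), if_pos (by omega)]
    simp [rsw]
  have h2 : ∏ t ∈ Finset.range (b' + 1),
      rsw p q (opsPN (a' + 1) (a' + 1 + (b' + 1)) (a' + 1 + t))
        (opsPN (a' + 1) (a' + 1 + (b' + 1)) (a' + 1 + t + 1))
      = (1 - p)^b' * p := by
    rw [Finset.prod_range_succ]
    have e1 : ∀ t ∈ Finset.range b',
        rsw p q (opsPN (a' + 1) (a' + 1 + (b' + 1)) (a' + 1 + t))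
          (opsPN (a' + 1) (a' + 1 + (b' + 1)) (a' + 1 + t + 1)) = 1 - p := by
      intro t ht
      rw [Finset.mem_range] at ht
      unfold opsPN
      rw [if_neg (by omega), if_pos (by omega), if_neg (by omega), if_pos (by omega)]
      rfl
    rw [Finset.prod_congr rfl e1, Finset.prod_const]
    unfold opsPN
    rw [if_neg (by omega), if_pos (by omega), if_neg (by omega), if_neg (by omega)]
    simp [rsw]
  rw [h1, h2]
  simp

lemma opsPN_list {a b : ℕ} :
    List.ofFn (fun t : Fin (a + b) => opsPN a (a + b) (t : ℕ))
      = List.replicate a Op.AM ++ List.replicate b Op.OI := by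
  apply List.ext_getElem
  · simp
  · intro k h1 h2
    rw [List.getElem_ofFn]
    simp only [Fin.val_mk]
    simp only [List.length_ofFn] at h1
    unfold opsPN
    rcases lt_or_ge k a with hk | hk
    · rw [if_pos (by omega)]
      rw [List.getElem_append_left (by simpa using hk)]
      simp
    · rw [if_neg (by omega), if_pos (by omega)]
      rw [List.getElem_append_right (by simpa using hk)]
      simp

end Aux3
section Aux4

open Finset
open scoped Classical

variable {n : ℕ}

noncomputable def useq (q : ℝ) : ℕ → ℝ
  | 0 => 0
  | a + 1 => q * (1 - q)^a

noncomputable def vseq (p : ℝ) : ℕ → ℝ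
  | 0 => 0
  | b + 1 => p * (1 - p)^b

noncomputable def useq2 (q : ℝ) (n : ℕ) : ℕ → ℝ := fun a => useq q a * (1 - 2/(n:ℝ))^a

noncomputable def vseq1 (p : ℝ) (n : ℕ) : ℕ → ℝ := fun b => vseq p b * (1 - 1/(n:ℝ))^b

/-- Real-valued full transition matrix. -/
noncomputable def rtrans (n : ℕ) (p q : ℝ) (s s' : Point n × Op) : ℝ :=
  K n s.2 s.1 s'.1 * rsw p q s.2 s'.2

/-- Extension of a finite trajectory of operators to `ℕ`. -/
def extO {m : ℕ} (ops : Fin (m+1) → Op) : ℕ → Op := fun t => ops ⟨min t m, by omega⟩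

/-- F1: the inner sum over point trajectories. -/
lemma pts_sum (hn : 0 < n) (m : ℕ) (ops : Fin m → Op) (x0 : Point n) :
    ∑ pts : Fin (m+1) → Point n,
      (if pts 0 = x0 then
        (∏ t : Fin m, K n (ops t) (pts t.castSucc) (pts t.succ))
          * (yR (pts 0) - yR (pts (Fin.last m)))
       else 0)
      = yR x0 - W n (List.ofFn ops) yR x0 := by
  have h1 : ∀ pts : Fin (m+1) → Point n,
      (if pts 0 = x0 then
        (∏ t : Fin m, K n (ops t) (pts t.castSucc) (pts t.succ))
          * (yR (pts 0) - yR (pts (Fin.last m)))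
       else 0)
      = yR x0 * (if pts 0 = x0 then
          (∏ t : Fin m, K n (ops t) (pts t.castSucc) (pts t.succ))
            * (fun _ : Point n => (1:ℝ)) (pts (Fin.last m)) else 0)
        - (if pts 0 = x0 then
          (∏ t : Fin m, K n (ops t) (pts t.castSucc) (pts t.succ)) * yR (pts (Fin.last m))
         else 0) := by
    intro pts
    by_cases h : pts 0 = x0
    · rw [if_pos h, if_pos h, if_pos h, h]
      ring
    · rw [if_neg h, if_neg h, if_neg h]
      ring
  rw [Finset.sum_congr rfl fun pts _ => h1 pts, Finset.sum_sub_distrib, ← Finset.mul_sum,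
    traj_sum m ops (fun _ => (1:ℝ)) x0, traj_sum m ops yR x0, W_const hn]
  simp

/-- F4: evaluation of the one-pattern body. -/
lemma body_eval (hn : 2 ≤ n) (p q : ℝ) (x0 : Point n) (a b : ℕ) (ha : 0 < a) (hbpos : 0 < b) :
    (∏ t : Fin (a + b), rsw p q (opsPN a (a + b) (t.castSucc : ℕ)) (opsPN a (a + b) (t.succ : ℕ)))
      * (yR x0 - W n (List.ofFn fun t : Fin (a + b) => opsPN a (a + b) (t.castSucc : ℕ)) yR x0)
    = yR x0 * useq q a * vseq p b
      - (yR x0 - (n:ℝ)/2) * useq2 q n a * vseq1 p n b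
      - ((n:ℝ)/2) * useq q a * vseq1 p n b := by
  have hn0 : 0 < n := by omega
  have hn' : (n:ℝ) ≠ 0 := by positivity
  -- switch product
  have hsw : (∏ t : Fin (a + b), rsw p q (opsPN a (a + b) (t.castSucc : ℕ))
        (opsPN a (a + b) (t.succ : ℕ)))
      = useq q a * vseq p b := by
    have : ∀ t : Fin (a + b), rsw p q (opsPN a (a + b) (t.castSucc : ℕ))
        (opsPN a (a + b) (t.succ : ℕ))
        = (fun j : ℕ => rsw p q (opsPN a (a + b) j) (opsPN a (a + b) (j + 1))) (t : ℕ) := by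
      intro t
      simp [Fin.coe_castSucc, Fin.val_succ]
    rw [Finset.prod_congr rfl fun t _ => this t,
      Fin.prod_univ_eq_prod_range (fun j : ℕ => rsw p q (opsPN a (a + b) j) (opsPN a (a + b) (j + 1))) (a+b),
      swprod p q ha hbpos]
    obtain ⟨a', rfl⟩ : ∃ a', a = a' + 1 := ⟨a - 1, by omega⟩
    obtain ⟨b', rfl⟩ : ∃ b', b = b' + 1 := ⟨b - 1, by omega⟩
    simp [useq, vseq]
    ring
  -- W evaluation
  have hlist : (List.ofFn fun t : Fin (a + b) => opsPN a (a + b) (t.castSucc : ℕ))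
      = List.replicate a Op.AM ++ List.replicate b Op.OI := by
    rw [← opsPN_list]
    congr 1
  have hyr : (yR : Point n → ℝ) = fun x => 1 * yR x + 0 := by funext x; ring
  have hW : W n (List.ofFn fun t : Fin (a + b) => opsPN a (a + b) (t.castSucc : ℕ)) yR x0
      = (1 - 1/(n:ℝ))^b * (1 - 2/(n:ℝ))^a * yR x0
        + (1 - 1/(n:ℝ))^b * (1 - (1 - 2/(n:ℝ))^a) * ((n:ℝ)/2) := by
    rw [hlist, W_append, hyr, W_OI_rep hn0, W_AM_rep hn0]
    ring
  rw [hsw, hW]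
  unfold useq2 vseq1
  ring

end Aux4
section Aux5

open Finset
open scoped Classical

variable {n : ℕ}

def opsF (a m : ℕ) : Fin (m+1) → Op := fun j => opsPN a m (j : ℕ)

lemma patN_opsPN' {a m : ℕ} (ha : 0 < a) (ham : a < m) : PatN (opsPN a m) a m := by
  obtain ⟨b, rfl⟩ : ∃ b, m = a + b := ⟨m - a, by omega⟩
  exact patN_opsPN ha (by omega)

lemma extO_opsF {a m : ℕ} : ∀ t ≤ m, opsPN a m t = extO (opsF a m) t := by
  intro t ht
  unfold extO opsF
  simp [Nat.min_eq_left ht]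

lemma patN_extO_opsF {a m : ℕ} (ha : 0 < a) (ham : a < m) :
    PatN (extO (opsF a m)) a m :=
  patN_congr extO_opsF (patN_opsPN' ha ham)

lemma ops_sum (hn : 2 ≤ n) (p q : ℝ) (x0 : Point n) (m : ℕ) :
    ∑ ops : Fin (m+1) → Op,
      (if (∃ a, PatN (extO ops) a m) ∧ ops 0 = Op.AM then
        (∏ t : Fin m, rsw p q (ops t.castSucc) (ops t.succ))
          * (yR x0 - W n (List.ofFn fun t : Fin m => ops t.castSucc) yR x0)
       else 0)
    = ∑ kl ∈ Finset.HasAntidiagonal.antidiagonal m,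
        (yR x0 * useq q kl.1 * vseq p kl.2
          - (yR x0 - (n:ℝ)/2) * useq2 q n kl.1 * vseq1 p n kl.2
          - ((n:ℝ)/2) * useq q kl.1 * vseq1 p n kl.2) := by
  have hn0 : 0 < n := by omega
  -- RHS as a sum over `Ico 1 m`
  rw [Finset.Nat.sum_antidiagonal_eq_sum_range_succ_mk]
  have hsub : Finset.Ico 1 m ⊆ Finset.range (m+1) := by
    intro a ha
    rw [Finset.mem_Ico] at ha
    rw [Finset.mem_range]
    omega
  rw [← Finset.sum_subset hsub (fun a ha hna => by
    rw [Finset.mem_range] at ha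
    rw [Finset.mem_Ico] at hna
    have : a = 0 ∨ a = m := by omega
    rcases this with rfl | rfl
    · simp [useq, useq2]
    · simp [vseq, vseq1, Nat.sub_self])]
  -- LHS: restrict to the support and then use the bijection with `Ico 1 m`
  rw [← Finset.sum_filter_of_ne (s := (Finset.univ : Finset (Fin (m+1) → Op)))
    (p := fun ops => (∃ a, PatN (extO ops) a m) ∧ ops 0 = Op.AM)
    (fun ops _ hne => by
      by_contra hc
      exact hne (if_neg hc))]
  refine (Finset.sum_bij (fun (a : ℕ) (ha : a ∈ Finset.Ico 1 m) => opsF a m)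
    ?_ ?_ ?_ ?_).symm
  · -- maps into the filter
    intro a ha
    rw [Finset.mem_Ico] at ha
    rw [Finset.mem_filter]
    refine ⟨Finset.mem_univ _, ⟨a, patN_extO_opsF (by omega) (by omega)⟩, ?_⟩
    show opsPN a m ((0 : Fin (m+1)) : ℕ) = Op.AM
    have h00 : ((0 : Fin (m+1)) : ℕ) = 0 := rfl
    rw [h00]
    unfold opsPN
    rw [if_pos (by omega : 0 < a)]
  · -- injective
    intro a₁ ha₁ a₂ ha₂ heq
    rw [Finset.mem_Ico] at ha₁ ha₂
    have p₁ := patN_extO_opsF (a := a₁) (m := m) (by omega) (by omega)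
    have p₂ := patN_extO_opsF (a := a₂) (m := m) (by omega) (by omega)
    have heq' : opsF a₁ m = opsF a₂ m := heq
    rw [heq'] at p₁
    exact (patN_unique p₁ p₂).1
  · -- surjective
    intro ops hops
    rw [Finset.mem_filter] at hops
    obtain ⟨-, ⟨a, hpat⟩, h0⟩ := hops
    have ha : a ∈ Finset.Ico 1 m := by
      rw [Finset.mem_Ico]
      exact ⟨hpat.1, hpat.2.1⟩
    refine ⟨a, ha, ?_⟩
    have h0' : extO ops 0 = Op.AM := by
      unfold extO
      have : (⟨min 0 m, by omega⟩ : Fin (m+1)) = 0 := by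
        apply Fin.ext
        simp
      rw [this]
      exact h0
    funext j
    have hj : (j : ℕ) ≤ m := by omega
    have := patN_eq_opsPN hpat h0' (j : ℕ) hj
    unfold extO at this
    have hjj : (⟨min (j : ℕ) m, by omega⟩ : Fin (m+1)) = j := by
      apply Fin.ext
      simp [Nat.min_eq_left hj]
    rw [hjj] at this
    show opsF a m j = ops j
    exact this.symm
  · -- values agree
    intro a ha
    rw [Finset.mem_Ico] at ha
    rw [if_pos (show (∃ a', PatN (extO (opsF a m)) a' m) ∧ opsF a m 0 = Op.AM from
      ⟨⟨a, patN_extO_opsF (by omega) (by omega)⟩, by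
        show opsPN a m ((0 : Fin (m+1)) : ℕ) = Op.AM
        have h00 : ((0 : Fin (m+1)) : ℕ) = 0 := rfl
        rw [h00]
        unfold opsPN
        rw [if_pos (by omega : 0 < a)]⟩)]
    obtain ⟨b, rfl⟩ : ∃ b, m = a + b := ⟨m - a, by omega⟩
    have hb : 0 < b := by omega
    have := body_eval (x0 := x0) hn p q a b (by omega) hb
    have harg : (a + b) - a = b := by omega
    rw [harg]
    rw [← this]
    rfl

end Aux5
section Aux6

open Finset
open scoped Classical

variable {n : ℕ}

/-- Extension of a finite trajectory to `ℕ` (constant after `m`). -/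
def extS {m : ℕ} (σ : Fin (m+1) → Point n × Op) : ℕ → Point n × Op :=
  fun t => σ ⟨min t m, by omega⟩

lemma sigma_sum (hn : 2 ≤ n) (p q : ℝ) (x0 : Point n) (m : ℕ) :
    ∑ σ : Fin (m+1) → Point n × Op,
      (if ∃ a, PatN (fun t => (extS σ t).2) a m then
        ((if σ 0 = (x0, Op.AM) then (1:ℝ) else 0)
          * ∏ t : Fin m, rtrans n p q (σ t.castSucc) (σ t.succ))
          * (yR (σ 0).1 - yR (σ (Fin.last m)).1)
       else 0)
    = ∑ kl ∈ Finset.HasAntidiagonal.antidiagonal m,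
        (yR x0 * useq q kl.1 * vseq p kl.2
          - (yR x0 - (n:ℝ)/2) * useq2 q n kl.1 * vseq1 p n kl.2
          - ((n:ℝ)/2) * useq q kl.1 * vseq1 p n kl.2) := by
  have hn0 : 0 < n := by omega
  rw [← ops_sum hn p q x0 m]
  have hbij : Function.Bijective
      (fun w : (Fin (m+1) → Point n) × (Fin (m+1) → Op) =>
        (fun j => (w.1 j, w.2 j) : Fin (m+1) → Point n × Op)) := by
    constructor
    · rintro ⟨pts, ops⟩ ⟨pts', ops'⟩ h
      have h1 : ∀ j, (pts j, ops j) = (pts' j, ops' j) := fun j => congrFun h j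
      have hp : pts = pts' := funext fun j => congrArg Prod.fst (h1 j)
      have ho : ops = ops' := funext fun j => congrArg Prod.snd (h1 j)
      rw [Prod.ext_iff]
      exact ⟨hp, ho⟩
    · intro σ
      exact ⟨(fun j => (σ j).1, fun j => (σ j).2), by funext j; simp⟩
  rw [← Fintype.sum_bijective _ hbij _ _ (fun w => rfl)]
  rw [Fintype.sum_prod_type, Finset.sum_comm]
  refine Finset.sum_congr rfl (fun ops _ => ?_)
  by_cases hc : (∃ a, PatN (extO ops) a m) ∧ ops 0 = Op.AM
  · rw [if_pos hc]
    have hterm : ∀ pts : Fin (m+1) → Point n,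
        (if ∃ a, PatN (fun t => (extS (fun j => (pts j, ops j)) t).2) a m then
          ((if (pts 0, ops 0) = (x0, Op.AM) then (1:ℝ) else 0)
            * ∏ t : Fin m, rtrans n p q (pts t.castSucc, ops t.castSucc) (pts t.succ, ops t.succ))
            * (yR (pts 0) - yR (pts (Fin.last m)))
         else 0)
        = (∏ t : Fin m, rsw p q (ops t.castSucc) (ops t.succ)) *
            (if pts 0 = x0 then
              (∏ t : Fin m, K n (ops t.castSucc) (pts t.castSucc) (pts t.succ))
                * (yR (pts 0) - yR (pts (Fin.last m)))
             else 0) := by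
      intro pts
      rw [if_pos (show ∃ a, PatN (fun t => (extS (fun j => (pts j, ops j)) t).2) a m from hc.1)]
      have hprod : (∏ t : Fin m, rtrans n p q (pts t.castSucc, ops t.castSucc) (pts t.succ, ops t.succ))
          = (∏ t : Fin m, K n (ops t.castSucc) (pts t.castSucc) (pts t.succ))
            * ∏ t : Fin m, rsw p q (ops t.castSucc) (ops t.succ) := by
        rw [← Finset.prod_mul_distrib]
        rfl
      rw [hprod]
      by_cases hp : pts 0 = x0
      · rw [if_pos hp, if_pos (by rw [hp, hc.2])]
        ring
      · rw [if_neg hp, if_neg (fun hcon => hp (congrArg Prod.fst hcon))]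
        ring
    rw [Finset.sum_congr rfl fun pts _ => hterm pts, ← Finset.mul_sum]
    congr 1
    exact pts_sum hn0 m (fun t => ops t.castSucc) x0
  · rw [if_neg hc]
    apply Finset.sum_eq_zero
    intro pts _
    by_cases hpat : ∃ a, PatN (extO ops) a m
    · have h0 : ops 0 ≠ Op.AM := fun h => hc ⟨hpat, h⟩
      rw [if_pos (show ∃ a, PatN (fun t => (extS (fun j => (pts j, ops j)) t).2) a m from hpat)]
      rw [if_neg (fun hcon => h0 (congrArg Prod.snd hcon))]
      ring
    · rw [if_neg (show ¬ ∃ a, PatN (fun t => (extS (fun j => (pts j, ops j)) t).2) a m from hpat)]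

end Aux6
section Aux7

open Finset

variable {n : ℕ}

lemma useq_nonneg {q : ℝ} (hq0 : 0 < q) (hq1 : q < 1) : ∀ a, 0 ≤ useq q a := by
  intro a
  cases a with
  | zero => exact le_refl 0
  | succ a => exact mul_nonneg (by linarith) (pow_nonneg (by linarith) _)

lemma useq_succ (q : ℝ) (a : ℕ) : useq q (a + 1) = q * (1 - q)^a := rfl

lemma summable_useq {q : ℝ} (hq0 : 0 < q) (hq1 : q < 1) : Summable (useq q) := by
  refine (_root_.summable_nat_add_iff 1).1 ?_
  exact Summable.congr ((summable_geometric_of_lt_one (by linarith) (by linarith)).mul_left q)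
    (fun a => (useq_succ q a).symm)

lemma tsum_useq {q : ℝ} (hq0 : 0 < q) (hq1 : q < 1) : ∑' a, useq q a = 1 := by
  rw [Summable.tsum_eq_zero_add (summable_useq hq0 hq1)]
  rw [tsum_congr (useq_succ q), tsum_mul_left,
    tsum_geometric_of_lt_one (by linarith) (by linarith)]
  show 0 + q * (1 - (1 - q))⁻¹ = 1
  rw [show (1:ℝ) - (1 - q) = q by ring, mul_inv_cancel₀ (ne_of_gt hq0)]
  ring

/-- Generic geometric-with-ratio-twist sums: `∑ w a * r^a` for `w = useq q`. -/
lemma useq_mul_pow_succ (q r : ℝ) (a : ℕ) :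
    useq q (a + 1) * r^(a + 1) = (q * r) * ((1 - q) * r)^a := by
  rw [useq_succ, mul_pow, pow_succ]
  ring

lemma summable_useq_mul_pow {q r : ℝ} (hq0 : 0 < q) (hq1 : q < 1)
    (hr0 : 0 ≤ r) (hr1 : r < 1) : Summable (fun a => useq q a * r^a) := by
  have hqr0 : 0 ≤ (1 - q) * r := mul_nonneg (by linarith) hr0
  have hqr1 : (1 - q) * r < 1 :=
    lt_of_le_of_lt (mul_le_of_le_one_left hr0 (by linarith)) hr1
  refine (_root_.summable_nat_add_iff 1).1 ?_
  exact Summable.congr ((summable_geometric_of_lt_one hqr0 hqr1).mul_left (q * r))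
    (fun a => (useq_mul_pow_succ q r a).symm)

lemma tsum_useq_mul_pow {q r : ℝ} (hq0 : 0 < q) (hq1 : q < 1)
    (hr0 : 0 ≤ r) (hr1 : r < 1) :
    ∑' a, useq q a * r^a = q * r / (1 - (1 - q) * r) := by
  have hqr0 : 0 ≤ (1 - q) * r := mul_nonneg (by linarith) hr0
  have hqr1 : (1 - q) * r < 1 :=
    lt_of_le_of_lt (mul_le_of_le_one_left hr0 (by linarith)) hr1
  rw [Summable.tsum_eq_zero_add (summable_useq_mul_pow hq0 hq1 hr0 hr1)]
  rw [tsum_congr (useq_mul_pow_succ q r), tsum_mul_left,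
    tsum_geometric_of_lt_one hqr0 hqr1]
  show useq q 0 * r ^ 0 + q * r * (1 - (1 - q) * r)⁻¹ = q * r / (1 - (1 - q) * r)
  rw [div_eq_mul_inv]
  show (0:ℝ) * r ^ 0 + q * r * (1 - (1 - q) * r)⁻¹ = q * r * (1 - (1 - q) * r)⁻¹
  ring

lemma vseq_eq_useq (p : ℝ) : vseq p = useq p := by
  funext b
  cases b <;> rfl

lemma useq2_eq (q : ℝ) (n : ℕ) : useq2 q n = fun a => useq q a * (1 - 2/(n:ℝ))^a := rfl

lemma vseq1_eq (p : ℝ) (n : ℕ) : vseq1 p n = fun b => useq p b * (1 - 1/(n:ℝ))^b := by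
  funext b
  rw [vseq1, vseq_eq_useq]

/-- Summing the three-term antidiagonal expression. -/
lemma total_eval (hn : 2 ≤ n) {p q : ℝ}
    (hp0 : 0 < p) (hp1 : p < 1) (hq0 : 0 < q) (hq1 : q < 1) (Y : ℝ) :
    ∑' m : ℕ, (∑ kl ∈ Finset.HasAntidiagonal.antidiagonal m,
        (Y * useq q kl.1 * vseq p kl.2
          - (Y - (n:ℝ)/2) * useq2 q n kl.1 * vseq1 p n kl.2
          - ((n:ℝ)/2) * useq q kl.1 * vseq1 p n kl.2))
    = Y - (Y - (n:ℝ)/2) * (q * (1 - 2/(n:ℝ)) / (1 - (1 - q) * (1 - 2/(n:ℝ))))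
          * (p * (1 - 1/(n:ℝ)) / (1 - (1 - p) * (1 - 1/(n:ℝ))))
        - ((n:ℝ)/2) * (p * (1 - 1/(n:ℝ)) / (1 - (1 - p) * (1 - 1/(n:ℝ)))) := by
  have hn0 : 0 < n := by omega
  have hn0' : (0:ℝ) < (n:ℝ) := by exact_mod_cast hn0
  have hr2_0 : (0:ℝ) ≤ 1 - 2/(n:ℝ) := by
    rw [sub_nonneg, div_le_one hn0']
    exact_mod_cast hn
  have hr2_1 : (1:ℝ) - 2/(n:ℝ) < 1 := by
    have : (0:ℝ) < 2/(n:ℝ) := by positivity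
    linarith
  have hr1_0 : (0:ℝ) ≤ 1 - 1/(n:ℝ) := by
    rw [sub_nonneg, div_le_one hn0']
    exact_mod_cast hn0
  have hr1_1 : (1:ℝ) - 1/(n:ℝ) < 1 := by
    have : (0:ℝ) < 1/(n:ℝ) := by positivity
    linarith
  -- the four summable sequences
  have hu : Summable (useq q) := summable_useq hq0 hq1
  have hv : Summable (vseq p) := by rw [vseq_eq_useq]; exact summable_useq hp0 hp1
  have hu2 : Summable (useq2 q n) := summable_useq_mul_pow hq0 hq1 hr2_0 hr2_1
  have hv1 : Summable (vseq1 p n) := by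
    rw [vseq1_eq]
    exact summable_useq_mul_pow hp0 hp1 hr1_0 hr1_1
  -- norm-summability
  have hupos := useq_nonneg hq0 hq1
  have hvpos : ∀ b, 0 ≤ vseq p b := by rw [vseq_eq_useq]; exact useq_nonneg hp0 hp1
  have hu2pos : ∀ a, 0 ≤ useq2 q n a :=
    fun a => mul_nonneg (hupos a) (pow_nonneg hr2_0 a)
  have hv1pos : ∀ b, 0 ≤ vseq1 p n b := by
    rw [vseq1_eq]
    exact fun b => mul_nonneg (useq_nonneg hp0 hp1 b) (pow_nonneg hr1_0 b)
  have hun : Summable (fun a => ‖useq q a‖) :=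
    hu.congr (fun a => (Real.norm_of_nonneg (hupos a)).symm)
  have hvn : Summable (fun b => ‖vseq p b‖) :=
    hv.congr (fun b => (Real.norm_of_nonneg (hvpos b)).symm)
  have hu2n : Summable (fun a => ‖useq2 q n a‖) :=
    hu2.congr (fun a => (Real.norm_of_nonneg (hu2pos a)).symm)
  have hv1n : Summable (fun b => ‖vseq1 p n b‖) :=
    hv1.congr (fun b => (Real.norm_of_nonneg (hv1pos b)).symm)
  -- antidiagonal sums
  have hS1 : Summable (fun m => ∑ kl ∈ Finset.HasAntidiagonal.antidiagonal m, useq q kl.1 * vseq p kl.2) :=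
    summable_sum_mul_antidiagonal_of_summable_norm' hun hu hvn hv
  have hS2 : Summable (fun m => ∑ kl ∈ Finset.HasAntidiagonal.antidiagonal m, useq2 q n kl.1 * vseq1 p n kl.2) :=
    summable_sum_mul_antidiagonal_of_summable_norm' hu2n hu2 hv1n hv1
  have hS3 : Summable (fun m => ∑ kl ∈ Finset.HasAntidiagonal.antidiagonal m, useq q kl.1 * vseq1 p n kl.2) :=
    summable_sum_mul_antidiagonal_of_summable_norm' hun hu hv1n hv1
  have hT1 := tsum_mul_tsum_eq_tsum_sum_antidiagonal_of_summable_norm hun hvn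
  have hT2 := tsum_mul_tsum_eq_tsum_sum_antidiagonal_of_summable_norm hu2n hv1n
  have hT3 := tsum_mul_tsum_eq_tsum_sum_antidiagonal_of_summable_norm hun hv1n
  -- rewrite the summand per m
  have hper : ∀ m : ℕ, (∑ kl ∈ Finset.HasAntidiagonal.antidiagonal m,
        (Y * useq q kl.1 * vseq p kl.2
          - (Y - (n:ℝ)/2) * useq2 q n kl.1 * vseq1 p n kl.2
          - ((n:ℝ)/2) * useq q kl.1 * vseq1 p n kl.2))
      = Y * (∑ kl ∈ Finset.HasAntidiagonal.antidiagonal m, useq q kl.1 * vseq p kl.2)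
        - (Y - (n:ℝ)/2) * (∑ kl ∈ Finset.HasAntidiagonal.antidiagonal m, useq2 q n kl.1 * vseq1 p n kl.2)
        - ((n:ℝ)/2) * (∑ kl ∈ Finset.HasAntidiagonal.antidiagonal m, useq q kl.1 * vseq1 p n kl.2) := by
    intro m
    rw [Finset.sum_sub_distrib, Finset.sum_sub_distrib, Finset.mul_sum, Finset.mul_sum,
      Finset.mul_sum]
    congr 1
    · congr 1
      · exact Finset.sum_congr rfl fun kl _ => by ring
      · exact Finset.sum_congr rfl fun kl _ => by ring
    · exact Finset.sum_congr rfl fun kl _ => by ring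
  rw [tsum_congr hper]
  rw [Summable.tsum_sub ((hS1.mul_left Y).sub (hS2.mul_left _)) (hS3.mul_left _),
    Summable.tsum_sub (hS1.mul_left Y) (hS2.mul_left _), tsum_mul_left, tsum_mul_left, tsum_mul_left,
    ← hT1, ← hT2, ← hT3]
  rw [tsum_useq hq0 hq1]
  rw [show (∑' b, vseq p b) = 1 by rw [vseq_eq_useq]; exact tsum_useq hp0 hp1]
  rw [show (∑' a, useq2 q n a) = q * (1 - 2/(n:ℝ)) / (1 - (1 - q) * (1 - 2/(n:ℝ))) from
    tsum_useq_mul_pow hq0 hq1 hr2_0 hr2_1]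
  rw [show (∑' b, vseq1 p n b) = p * (1 - 1/(n:ℝ)) / (1 - (1 - p) * (1 - 1/(n:ℝ))) by
    rw [vseq1_eq]; exact tsum_useq_mul_pow hp0 hp1 hr1_0 hr1_1]
  ring

end Aux7
section Aux8

open Finset

variable {n : ℕ} {Ω : Type} [MeasurableSpace Ω]

lemma nat_sInf_eq {S : Set ℕ} {m : ℕ} :
    sInf S = m ↔ (m ∈ S ∧ ∀ k, k < m → k ∉ S) ∨ (S = ∅ ∧ m = 0) := by
  constructor
  · intro h
    rcases Set.eq_empty_or_nonempty S with he | hne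
    · right
      exact ⟨he, by rw [← h, he, Nat.sInf_empty]⟩
    · left
      subst h
      exact ⟨Nat.sInf_mem hne, fun k hk => Nat.notMem_of_lt_sInf hk⟩
  · rintro (⟨hm, hmin⟩ | ⟨rfl, rfl⟩)
    · exact le_antisymm (Nat.sInf_le hm)
        (le_csInf ⟨m, hm⟩ fun b hb => not_lt.1 fun h => hmin b h hb)
    · exact Nat.sInf_empty

variable {X : ℕ → Ω → Point n × Op}

lemma sT1_eq {ω : Ω} {a m : ℕ} (h : PatN (fun t => (X t ω).2) a m) :
    switchTime X 1 ω = a := by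
  obtain ⟨ha, ham, h1, h2, _, _⟩ := h
  have hdef : switchTime X 1 ω
      = sInf {t : ℕ | 0 ≤ t ∧ (X t ω).2 ≠ (X 0 ω).2} := rfl
  rw [hdef]
  refine le_antisymm (Nat.sInf_le ⟨Nat.zero_le a, h2⟩) ?_
  refine le_csInf ⟨a, ⟨Nat.zero_le a, h2⟩⟩ fun b hb => ?_
  by_contra hlt
  push_neg at hlt
  exact hb.2 (h1 b hlt)

lemma sT2_eq {ω : Ω} {a m : ℕ} (h : PatN (fun t => (X t ω).2) a m) :
    switchTime X 2 ω = m := by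
  have h1 := sT1_eq h
  obtain ⟨ha, ham, hm1, hm2, hm3, hm4⟩ := h
  have hdef : switchTime X 2 ω
      = sInf {t : ℕ | switchTime X 1 ω ≤ t ∧ (X t ω).2 ≠ (X (switchTime X 1 ω) ω).2} := rfl
  rw [hdef, h1]
  refine le_antisymm (Nat.sInf_le ⟨le_of_lt ham, hm4⟩) ?_
  refine le_csInf ⟨m, ⟨le_of_lt ham, hm4⟩⟩ fun b hb => ?_
  by_contra hlt
  push_neg at hlt
  exact hb.2 (hm3 b hb.1 hlt)

lemma sT2_eq_zero {ω : Ω} (h : ∀ a m, ¬ PatN (fun t => (X t ω).2) a m) :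
    switchTime X 2 ω = 0 := by
  by_contra hm
  have hdef : switchTime X 2 ω
      = sInf {t : ℕ | switchTime X 1 ω ≤ t ∧ (X t ω).2 ≠ (X (switchTime X 1 ω) ω).2} := rfl
  -- the second-phase set must be nonempty
  have hne2 : {t : ℕ | switchTime X 1 ω ≤ t ∧ (X t ω).2 ≠ (X (switchTime X 1 ω) ω).2}.Nonempty := by
    by_contra hc
    rw [Set.not_nonempty_iff_eq_empty] at hc
    rw [hdef, hc, Nat.sInf_empty] at hm
    exact hm rfl
  have hdef1 : switchTime X 1 ω
      = sInf {t : ℕ | 0 ≤ t ∧ (X t ω).2 ≠ (X 0 ω).2} := rfl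
  -- the first-phase set is nonempty too
  have hne1 : {t : ℕ | 0 ≤ t ∧ (X t ω).2 ≠ (X 0 ω).2}.Nonempty := by
    by_contra hc
    rw [Set.not_nonempty_iff_eq_empty] at hc
    have h10 : switchTime X 1 ω = 0 := by rw [hdef1, hc, Nat.sInf_empty]
    obtain ⟨t, ht⟩ := hne2
    rw [h10] at ht
    have : t ∈ {t : ℕ | 0 ≤ t ∧ (X t ω).2 ≠ (X 0 ω).2} := ⟨Nat.zero_le t, ht.2⟩
    rw [hc] at this
    exact this
  set a := switchTime X 1 ω with hadef
  have hamem : a ∈ {t : ℕ | 0 ≤ t ∧ (X t ω).2 ≠ (X 0 ω).2} := by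
    rw [hdef1]
    exact Nat.sInf_mem hne1
  have hapos : 0 < a := by
    rcases Nat.eq_zero_or_pos a with h0 | h
    · exfalso
      have := hamem.2
      rw [h0] at this
      exact this rfl
    · exact h
  set m := switchTime X 2 ω with hmdef
  have hmmem : m ∈ {t : ℕ | a ≤ t ∧ (X t ω).2 ≠ (X a ω).2} := by
    rw [hdef]
    exact Nat.sInf_mem hne2
  have ham : a < m := by
    rcases lt_or_eq_of_le hmmem.1 with h | h
    · exact h
    · exact absurd (congrArg (fun t => (X t ω).2) h.symm) hmmem.2
  refine h a m ⟨hapos, ham, fun t ht => ?_, hamem.2, fun t ht1 ht2 => ?_, hmmem.2⟩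
  · by_contra hc
    have : a ≤ t := by
      rw [hdef1]
      exact Nat.sInf_le ⟨Nat.zero_le t, hc⟩
    omega
  · by_contra hc
    have : m ≤ t := by
      rw [hdef]
      exact Nat.sInf_le ⟨ht1, hc⟩
    omega

end Aux8
section Aux9

open Finset MeasureTheory

variable {n : ℕ} {Ω : Type} [MeasurableSpace Ω]
variable {X : ℕ → Ω → Point n × Op}

lemma measurableSet_S (A : Set (Point n × Op)) : MeasurableSet A :=
  (Set.toFinite A).measurableSet

lemma meas_state (hX : ∀ t, Measurable (X t)) (t : ℕ) (A : Set (Point n × Op)) :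
    MeasurableSet {ω | X t ω ∈ A} :=
  hX t (measurableSet_S A)

lemma meas_op_eq (hX : ∀ t, Measurable (X t)) (t u : ℕ) :
    MeasurableSet {ω | (X t ω).2 = (X u ω).2} := by
  have : {ω | (X t ω).2 = (X u ω).2}
      = ⋃ o : Op, ({ω | X t ω ∈ {s | s.2 = o}} ∩ {ω | X u ω ∈ {s | s.2 = o}}) := by
    ext ω
    simp only [Set.mem_iUnion, Set.mem_inter_iff, Set.mem_setOf_eq]
    constructor
    · intro h
      exact ⟨(X u ω).2, h, rfl⟩
    · rintro ⟨o, h1, h2⟩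
      rw [h1, h2]
  rw [this]
  exact MeasurableSet.iUnion fun o =>
    (meas_state hX t _).inter (meas_state hX u _)

lemma meas_patN (hX : ∀ t, Measurable (X t)) (a m : ℕ) :
    MeasurableSet {ω | PatN (fun t => (X t ω).2) a m} := by
  by_cases hnum : 0 < a ∧ a < m
  · have heq : {ω | PatN (fun t => (X t ω).2) a m}
        = ((⋂ t, ⋂ (_ : t < a), {ω | (X t ω).2 = (X 0 ω).2})
          ∩ {ω | (X a ω).2 = (X 0 ω).2}ᶜ)
          ∩ ((⋂ t, ⋂ (_ : a ≤ t), ⋂ (_ : t < m), {ω | (X t ω).2 = (X a ω).2})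
          ∩ {ω | (X m ω).2 = (X a ω).2}ᶜ) := by
      ext ω
      simp only [PatN, Set.mem_inter_iff, Set.mem_iInter, Set.mem_compl_iff, Set.mem_setOf_eq]
      constructor
      · rintro ⟨_, _, h1, h2, h3, h4⟩
        exact ⟨⟨fun t ht => h1 t ht, h2⟩, ⟨fun t ht1 ht2 => h3 t ht1 ht2, h4⟩⟩
      · rintro ⟨⟨h1, h2⟩, ⟨h3, h4⟩⟩
        exact ⟨hnum.1, hnum.2, h1, h2, h3, h4⟩
    rw [heq]
    refine MeasurableSet.inter (MeasurableSet.inter ?_ ?_) (MeasurableSet.inter ?_ ?_)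
    · exact MeasurableSet.iInter fun t => MeasurableSet.iInter fun _ => meas_op_eq hX t 0
    · exact (meas_op_eq hX a 0).compl
    · exact MeasurableSet.iInter fun t => MeasurableSet.iInter fun _ =>
        MeasurableSet.iInter fun _ => meas_op_eq hX t a
    · exact (meas_op_eq hX m a).compl
  · have heq : {ω | PatN (fun t => (X t ω).2) a m} = ∅ := by
      ext ω
      simp only [Set.mem_empty_iff_false, iff_false, Set.mem_setOf_eq]
      intro hpat
      exact hnum ⟨hpat.1, hpat.2.1⟩
    rw [heq]
    exact MeasurableSet.empty

/-- The event that the second switch happens exactly at time `m`. -/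
def Bset (X : ℕ → Ω → Point n × Op) (m : ℕ) : Set Ω :=
  {ω | ∃ a, PatN (fun t => (X t ω).2) a m}

lemma meas_Bset (hX : ∀ t, Measurable (X t)) (m : ℕ) : MeasurableSet (Bset X m) := by
  have : Bset X m = ⋃ a : ℕ, {ω | PatN (fun t => (X t ω).2) a m} := by
    ext ω
    simp [Bset]
  rw [this]
  exact MeasurableSet.iUnion fun a => meas_patN hX a m

lemma disjoint_Bset : Pairwise (Function.onFun Disjoint (Bset X)) := by
  intro m m' hmm
  rw [Function.onFun, Set.disjoint_left]
  rintro ω ⟨a, ha⟩ ⟨a', ha'⟩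
  exact hmm (patN_unique ha ha').2

/-- Cylinder sets. -/
def cylSet (X : ℕ → Ω → Point n × Op) {m : ℕ} (σ : Fin (m+1) → Point n × Op) : Set Ω :=
  {ω | ∀ t ≤ m, X t ω = extS σ t}

lemma meas_cylSet (hX : ∀ t, Measurable (X t)) {m : ℕ} (σ : Fin (m+1) → Point n × Op) :
    MeasurableSet (cylSet X σ) := by
  have : cylSet X σ = ⋂ t : ℕ, ⋂ (_ : t ≤ m), {ω | X t ω ∈ ({extS σ t} : Set _)} := by
    ext ω
    simp [cylSet]
  rw [this]
  exact MeasurableSet.iInter fun t => MeasurableSet.iInter fun _ => meas_state hX t _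

lemma extS_self {m : ℕ} (σ : Fin (m+1) → Point n × Op) (j : Fin (m+1)) :
    extS σ (j : ℕ) = σ j := by
  unfold extS
  congr 1
  apply Fin.ext
  simp [Nat.min_eq_left (by omega : (j : ℕ) ≤ m)]

lemma extS_le {m : ℕ} (σ : Fin (m+1) → Point n × Op) (t : ℕ) (ht : t ≤ m) :
    extS σ t = σ ⟨t, by omega⟩ := by
  unfold extS
  congr 1
  apply Fin.ext
  simp [Nat.min_eq_left ht]

lemma cyl_cover (ω : Ω) (m : ℕ) : ∃ σ : Fin (m+1) → Point n × Op, ω ∈ cylSet X σ := by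
  refine ⟨fun j => X (j : ℕ) ω, fun t ht => ?_⟩
  rw [extS_le _ t ht]

lemma cyl_disjoint {m : ℕ} : Pairwise (Function.onFun Disjoint (fun σ : Fin (m+1) → Point n × Op =>
    cylSet X σ)) := by
  intro σ σ' hss
  rw [Function.onFun, Set.disjoint_left]
  intro ω h1 h2
  apply hss
  funext j
  have e1 := h1 (j : ℕ) (by omega)
  have e2 := h2 (j : ℕ) (by omega)
  rw [extS_self] at e1 e2
  rw [← e1, ← e2]

end Aux9
section Aux10

open Finset MeasureTheory

variable {n : ℕ} {Ω : Type} [MeasurableSpace Ω] {μ : Measure Ω} {X : ℕ → Ω → Point n × Op}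
variable {p q : ℝ} {x0 : Point n}

lemma cyl_measure (hchain : IsMMAHH μ X (OneMax n) p q) (τ : ℕ → Point n × Op) (m : ℕ) :
    μ {ω | ∀ t ≤ m, X t ω = τ t}
      = μ {ω | X 0 ω = τ 0}
        * ∏ t ∈ Finset.range m, mmahhTrans (OneMax n) p q (τ t) (τ (t+1)) := by
  induction m with
  | zero =>
    have h : {ω | ∀ t ≤ 0, X t ω = τ t} = {ω | X 0 ω = τ 0} := by
      ext ω
      simp [Nat.le_zero]
    rw [h]
    simp
  | succ m ih =>
    have hset : {ω | ∀ t ≤ m+1, X t ω = τ t}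
        = {ω | (∀ t ≤ m, X t ω = τ t) ∧ X (m+1) ω = τ (m+1)} := by
      ext ω
      simp only [Set.mem_setOf_eq]
      constructor
      · intro h
        exact ⟨fun t ht => h t (by omega), h (m+1) le_rfl⟩
      · rintro ⟨h1, h2⟩ t ht
        rcases Nat.lt_or_ge t (m+1) with h | h
        · exact h1 t (by omega)
        · have : t = m + 1 := by omega
          subst this
          exact h2
    rw [hset, hchain.2 m τ (τ (m+1)), ih, Finset.prod_range_succ, mul_assoc]

lemma init_measure (hprob : IsProbabilityMeasure μ) (hX : ∀ t, Measurable (X t))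
    (hinit : μ {ω | X 0 ω = (x0, Op.AM)} = 1) (s : Point n × Op) :
    μ {ω | X 0 ω = s} = if s = (x0, Op.AM) then 1 else 0 := by
  by_cases h : s = (x0, Op.AM)
  · rw [if_pos h, h]
    exact hinit
  · rw [if_neg h]
    have hm : MeasurableSet {ω | X 0 ω = (x0, Op.AM)} := meas_state hX 0 {(x0, Op.AM)}
    have h0 : μ {ω | X 0 ω = (x0, Op.AM)}ᶜ = 0 := by
      rw [prob_compl_eq_zero_iff hm]
      exact hinit
    have hsub : {ω | X 0 ω = s} ⊆ {ω | X 0 ω = (x0, Op.AM)}ᶜ := by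
      intro ω hω hc
      rw [Set.mem_setOf_eq] at hω hc
      rw [hω] at hc
      exact h hc
    exact le_antisymm (le_trans (measure_mono hsub) (le_of_eq h0)) (zero_le ..)

lemma trans_toReal (hp0 : 0 ≤ p) (hp1 : p ≤ 1) (hq0 : 0 ≤ q) (hq1 : q ≤ 1)
    (s s' : Point n × Op) :
    (mmahhTrans (OneMax n) p q s s').toReal = rtrans n p q s s' := by
  obtain ⟨xs, os⟩ := s
  obtain ⟨xs', os'⟩ := s'
  rw [mmahhTrans, ENNReal.toReal_mul, rtrans]
  congr 1
  · show (moveProb (OneMax n) os xs xs').toReal = K n os xs xs'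
    rw [moveProb, ENNReal.toReal_div, ENNReal.toReal_natCast, ENNReal.toReal_natCast]
    unfold K
    congr 1
  · show (switchProb p q os os').toReal = rsw p q os os'
    cases os <;> cases os' <;>
      simp [switchProb, rsw, ENNReal.toReal_ofReal, hp0, hq0,
        sub_nonneg.2 hp1, sub_nonneg.2 hq1]

lemma cyl_toReal (hprob : IsProbabilityMeasure μ) (hX : ∀ t, Measurable (X t))
    (hchain : IsMMAHH μ X (OneMax n) p q)
    (hinit : μ {ω | X 0 ω = (x0, Op.AM)} = 1)
    (hp0 : 0 ≤ p) (hp1 : p ≤ 1) (hq0 : 0 ≤ q) (hq1 : q ≤ 1)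
    {m : ℕ} (σ : Fin (m+1) → Point n × Op) :
    (μ (cylSet X σ)).toReal
      = (if σ 0 = (x0, Op.AM) then (1:ℝ) else 0)
        * ∏ t : Fin m, rtrans n p q (σ t.castSucc) (σ t.succ) := by
  have h1 : cylSet X σ = {ω | ∀ t ≤ m, X t ω = extS σ t} := rfl
  rw [h1, cyl_measure hchain (extS σ) m, ENNReal.toReal_mul,
    init_measure hprob hX hinit (extS σ 0)]
  have h0 : extS σ 0 = σ 0 := by
    rw [extS_le σ 0 (Nat.zero_le m)]
    congr 1
  rw [h0]
  congr 1
  · split_ifs <;> simp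
  · rw [ENNReal.toReal_prod,
      ← Fin.prod_univ_eq_prod_range
        (fun t => (mmahhTrans (OneMax n) p q (extS σ t) (extS σ (t+1))).toReal) m]
    refine Finset.prod_congr rfl fun t _ => ?_
    have e1 : extS σ (t : ℕ) = σ t.castSucc := by
      rw [extS_le σ (t : ℕ) (by omega)]
      congr 1
    have e2 : extS σ ((t : ℕ) + 1) = σ t.succ := by
      rw [extS_le σ ((t : ℕ) + 1) (by omega)]
      congr 1
    rw [e1, e2, trans_toReal hp0 hp1 hq0 hq1]

end Aux10
section Aux11

open Finset MeasureTheory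

variable {n : ℕ} {Ω : Type} [MeasurableSpace Ω] {X : ℕ → Ω → Point n × Op}

lemma meas_mem_shift (hX : ∀ t, Measurable (X t)) (a t : ℕ) :
    MeasurableSet {ω | a ≤ t ∧ (X t ω).2 ≠ (X a ω).2} := by
  by_cases hat : a ≤ t
  · have : {ω | a ≤ t ∧ (X t ω).2 ≠ (X a ω).2}
        = {ω | (X t ω).2 = (X a ω).2}ᶜ := by
      ext ω
      simp [hat]
    rw [this]
    exact (meas_op_eq hX t a).compl
  · have : {ω | a ≤ t ∧ (X t ω).2 ≠ (X a ω).2} = ∅ := by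
      ext ω
      simp [hat]
    rw [this]
    exact MeasurableSet.empty

lemma meas_sInf_eq (hX : ∀ t, Measurable (X t)) (a m : ℕ) :
    MeasurableSet {ω | sInf {t | a ≤ t ∧ (X t ω).2 ≠ (X a ω).2} = m} := by
  have hrw : {ω | sInf {t | a ≤ t ∧ (X t ω).2 ≠ (X a ω).2} = m}
      = (({ω | a ≤ m ∧ (X m ω).2 ≠ (X a ω).2}
          ∩ ⋂ k, ⋂ (_ : k < m), {ω | a ≤ k ∧ (X k ω).2 ≠ (X a ω).2}ᶜ)
        ∪ ((⋂ t, {ω | a ≤ t ∧ (X t ω).2 ≠ (X a ω).2}ᶜ)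
          ∩ {ω : Ω | m = 0})) := by
    ext ω
    rw [Set.mem_setOf_eq, nat_sInf_eq]
    simp only [Set.mem_union, Set.mem_inter_iff, Set.mem_setOf_eq, Set.mem_iInter,
      Set.mem_compl_iff, Set.eq_empty_iff_forall_notMem]
  rw [hrw]
  have hm0 : MeasurableSet {ω : Ω | m = 0} := by
    by_cases h : m = 0
    · have : {ω : Ω | m = 0} = Set.univ := by ext ω; simp [h]
      rw [this]; exact MeasurableSet.univ
    · have : {ω : Ω | m = 0} = ∅ := by ext ω; simp [h]
      rw [this]; exact MeasurableSet.empty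
  refine MeasurableSet.union
    (MeasurableSet.inter (meas_mem_shift hX a m)
      (MeasurableSet.iInter fun k => MeasurableSet.iInter fun _ =>
        (meas_mem_shift hX a k).compl))
    (MeasurableSet.inter
      (MeasurableSet.iInter fun t => (meas_mem_shift hX a t).compl) hm0)

lemma meas_sT (hX : ∀ t, Measurable (X t)) : ∀ k, Measurable (switchTime X k) := by
  intro k
  induction k with
  | zero => exact measurable_const
  | succ k ih =>
    apply measurable_to_countable'
    intro m
    have hrw : switchTime X (k+1) ⁻¹' {m}
        = ⋃ a : ℕ, (switchTime X k ⁻¹' {a}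
            ∩ {ω | sInf {t | a ≤ t ∧ (X t ω).2 ≠ (X a ω).2} = m}) := by
      ext ω
      simp only [Set.mem_preimage, Set.mem_singleton_iff, Set.mem_iUnion, Set.mem_inter_iff,
        Set.mem_setOf_eq]
      constructor
      · intro h
        refine ⟨switchTime X k ω, rfl, ?_⟩
        rw [← h]
        rfl
      · rintro ⟨a, ha, h⟩
        rw [show switchTime X (k+1) ω
            = sInf {t | switchTime X k ω ≤ t ∧ (X t ω).2 ≠ (X (switchTime X k ω) ω).2} from rfl,
          ha]
        exact h
    rw [hrw]
    exact MeasurableSet.iUnion fun a =>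
      (ih (MeasurableSet.singleton a)).inter (meas_sInf_eq hX a m)

lemma meas_XsT2 (hX : ∀ t, Measurable (X t)) :
    Measurable (fun ω => X (switchTime X 2 ω) ω) := by
  apply measurable_to_countable'
  intro s
  have hrw : (fun ω => X (switchTime X 2 ω) ω) ⁻¹' {s}
      = ⋃ m : ℕ, (switchTime X 2 ⁻¹' {m} ∩ {ω | X m ω ∈ ({s} : Set _)}) := by
    ext ω
    simp only [Set.mem_preimage, Set.mem_singleton_iff, Set.mem_iUnion, Set.mem_inter_iff,
      Set.mem_setOf_eq, Set.mem_singleton_iff]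
    constructor
    · intro h
      exact ⟨switchTime X 2 ω, rfl, h⟩
    · rintro ⟨m, hm, h⟩
      rw [hm]
      exact h
  rw [hrw]
  exact MeasurableSet.iUnion fun m =>
    (meas_sT hX 2 (MeasurableSet.singleton m)).inter (meas_state hX m _)

lemma meas_driftfun (hX : ∀ t, Measurable (X t)) :
    Measurable (fun ω => yR (X 0 ω).1 - yR (X (switchTime X 2 ω) ω).1) := by
  exact ((measurable_of_finite (fun s : Point n × Op => yR s.1)).comp (hX 0)).sub
    ((measurable_of_finite (fun s : Point n × Op => yR s.1)).comp (meas_XsT2 hX))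

end Aux11

/-- Drift over a pair of phases AM+OI on OneMax (Lemma 7 of the paper). -/
theorem drift_am_oi_phase (n : ℕ) (hn : 2 ≤ n) (p q : ℝ)
    (hp0 : 0 < p) (hp1 : p < 1) (hq0 : 0 < q) (hq1 : q < 1)
    (i : ℕ) (hi : i ≤ n) (x0 : Point n) (hx0 : n - ones x0 = i)
    (Ω : Type) [MeasurableSpace Ω] (μ : Measure Ω) (X : ℕ → Ω → Point n × Op)
    (hprob : IsProbabilityMeasure μ) (hchain : IsMMAHH μ X (OneMax n) p q)
    (hinit : μ {ω | X 0 ω = (x0, Op.AM)} = 1) :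
    ∫ ω, (((n : ℝ) - (ones (X 0 ω).1 : ℝ)) -
        ((n : ℝ) - (ones (X (switchTime X 2 ω) ω).1 : ℝ))) ∂μ
      = (2 * (i : ℝ) - (n : ℝ)) / (2 + q * ((n : ℝ) - 2)) +
        ((i : ℝ) - (2 * (i : ℝ) - (n : ℝ)) / (2 + q * ((n : ℝ) - 2))) /
          (1 + p * ((n : ℝ) - 1)) := by
  classical
  have hX := hchain.1
  have hn0 : 0 < n := by omega
  have hn0' : (0:ℝ) < (n:ℝ) := by exact_mod_cast hn0
  set F : Ω → ℝ := fun ω => yR (X 0 ω).1 - yR (X (switchTime X 2 ω) ω).1 with hFdef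
  -- the integrand is F
  have hInd : ∀ ω, (((n : ℝ) - (ones (X 0 ω).1 : ℝ)) -
      ((n : ℝ) - (ones (X (switchTime X 2 ω) ω).1 : ℝ))) = F ω := fun ω => rfl
  rw [integral_congr_ae (Filter.Eventually.of_forall hInd)]
  -- integrability
  have hFmeas : Measurable F := meas_driftfun hX
  have hFbound : ∀ ω, ‖F ω‖ ≤ 2 * (n:ℝ) := by
    intro ω
    rw [hFdef, Real.norm_eq_abs]
    have h1 := yR_nonneg (X 0 ω).1
    have h2 := yR_le (X 0 ω).1
    have h3 := yR_nonneg (X (switchTime X 2 ω) ω).1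
    have h4 := yR_le (X (switchTime X 2 ω) ω).1
    rw [abs_le]
    constructor <;> simp only [] <;> linarith
  have hFint : Integrable F μ := by
    refine Integrable.mono' (integrable_const (2*(n:ℝ))) hFmeas.aestronglyMeasurable ?_
    exact Filter.Eventually.of_forall hFbound
  -- decomposition over the second-switch time
  have hBmeas : ∀ m, MeasurableSet (Bset X m) := meas_Bset hX
  have hU : MeasurableSet (⋃ m, Bset X m) := MeasurableSet.iUnion hBmeas
  have hcompl : Set.EqOn F 0 (⋃ m, Bset X m)ᶜ := by
    intro ω hω
    have hnp : ∀ a m, ¬ PatN (fun t => (X t ω).2) a m := by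
      intro a m hp'
      rw [Set.mem_compl_iff, Set.mem_iUnion] at hω
      exact hω ⟨m, ⟨a, hp'⟩⟩
    show yR (X 0 ω).1 - yR (X (switchTime X 2 ω) ω).1 = 0
    rw [sT2_eq_zero hnp, sub_self]
  have hsplit : ∫ ω, F ω ∂μ = ∫ ω in (⋃ m, Bset X m), F ω ∂μ := by
    rw [← integral_add_compl hU hFint]
    have : ∫ ω in (⋃ m, Bset X m)ᶜ, F ω ∂μ = 0 := by
      rw [setIntegral_congr_fun hU.compl hcompl]
      simp
    rw [this, add_zero]
  rw [hsplit, integral_iUnion hBmeas disjoint_Bset hFint.integrableOn]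
  -- evaluate the integral over each `Bset X m`
  have hYx0 : yR x0 = (i:ℝ) := by
    have h1 := ones_le x0
    have h2 : i + ones x0 = n := by omega
    have h3 : (i:ℝ) + (ones x0 : ℝ) = (n:ℝ) := by exact_mod_cast h2
    unfold yR
    linarith
  have hBm : ∀ m : ℕ, ∫ ω in Bset X m, F ω ∂μ
      = ∑ kl ∈ Finset.HasAntidiagonal.antidiagonal m,
        ((i:ℝ) * useq q kl.1 * vseq p kl.2
          - ((i:ℝ) - (n:ℝ)/2) * useq2 q n kl.1 * vseq1 p n kl.2
          - ((n:ℝ)/2) * useq q kl.1 * vseq1 p n kl.2) := by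
    intro m
    -- split the event by the trajectory up to time m
    have hcover : Bset X m = ⋃ σ : Fin (m+1) → Point n × Op, (Bset X m ∩ cylSet X σ) := by
      ext ω
      simp only [Set.mem_iUnion, Set.mem_inter_iff]
      constructor
      · intro h
        obtain ⟨σ, hσ⟩ := cyl_cover (X := X) ω m
        exact ⟨σ, h, hσ⟩
      · rintro ⟨σ, h, _⟩
        exact h
    rw [hcover, integral_iUnion_fintype
      (fun σ => (hBmeas m).inter (meas_cylSet hX σ))
      (cyl_disjoint.mono fun σ σ' h => h.mono Set.inter_subset_right Set.inter_subset_right)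
      (fun σ => hFint.integrableOn)]
    -- evaluate each piece
    have hpiece : ∀ σ : Fin (m+1) → Point n × Op,
        ∫ ω in (Bset X m ∩ cylSet X σ), F ω ∂μ
        = (if ∃ a, PatN (fun t => (extS σ t).2) a m then
            ((if σ 0 = (x0, Op.AM) then (1:ℝ) else 0)
              * ∏ t : Fin m, rtrans n p q (σ t.castSucc) (σ t.succ))
              * (yR (σ 0).1 - yR (σ (Fin.last m)).1)
           else 0) := by
      intro σ
      have hσ0 : extS σ 0 = σ 0 := by
        rw [extS_le σ 0 (Nat.zero_le m)]
        congr 1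
      have hσm : extS σ m = σ (Fin.last m) := by
        rw [extS_le σ m le_rfl]
        congr 1
      by_cases hAdm : ∃ a, PatN (fun t => (extS σ t).2) a m
      · rw [if_pos hAdm]
        obtain ⟨a, hpat⟩ := hAdm
        -- on the cylinder, the trajectory pattern transfers
        have htrans : ∀ ω, ω ∈ cylSet X σ → PatN (fun t => (X t ω).2) a m := by
          intro ω hω
          refine patN_congr (fun t ht => ?_) hpat
          rw [hω t ht]
        have hsub : cylSet X σ ⊆ Bset X m := fun ω hω => ⟨a, htrans ω hω⟩
        have hBC : Bset X m ∩ cylSet X σ = cylSet X σ := Set.inter_eq_right.mpr hsub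
        rw [hBC]
        have hFconst : Set.EqOn F (fun _ => yR (σ 0).1 - yR (σ (Fin.last m)).1)
            (cylSet X σ) := by
          intro ω hω
          show yR (X 0 ω).1 - yR (X (switchTime X 2 ω) ω).1 = _
          rw [sT2_eq (htrans ω hω), hω 0 (Nat.zero_le m), hω m le_rfl, hσ0, hσm]
        rw [setIntegral_congr_fun (meas_cylSet hX σ) hFconst, setIntegral_const, measureReal_def,
          cyl_toReal hprob hX hchain hinit (le_of_lt hp0) (le_of_lt hp1)
            (le_of_lt hq0) (le_of_lt hq1) σ]
        rw [smul_eq_mul]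
      · rw [if_neg hAdm]
        have hBC : Bset X m ∩ cylSet X σ = ∅ := by
          ext ω
          simp only [Set.mem_inter_iff, Set.mem_empty_iff_false, iff_false, not_and]
          rintro ⟨a, hpat⟩ hω
          refine hAdm ⟨a, patN_congr (fun t ht => ?_) hpat⟩
          rw [← hω t ht]
        rw [hBC]
        simp
    rw [Finset.sum_congr rfl fun σ _ => hpiece σ]
    rw [sigma_sum hn p q x0 m, hYx0]
  rw [tsum_congr hBm, total_eval hn hp0 hp1 hq0 hq1 ((i:ℝ))]
  -- final algebra
  have hr2_1 : (1:ℝ) - 2/(n:ℝ) < 1 := by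
    have : (0:ℝ) < 2/(n:ℝ) := by positivity
    linarith
  have hr2_0 : (0:ℝ) ≤ 1 - 2/(n:ℝ) := by
    rw [sub_nonneg, div_le_one hn0']
    exact_mod_cast hn
  have hr1_0 : (0:ℝ) ≤ 1 - 1/(n:ℝ) := by
    rw [sub_nonneg, div_le_one hn0']
    exact_mod_cast hn0
  have hD1 : (0:ℝ) < 1 - (1 - q) * (1 - 2/(n:ℝ)) := by
    have h1 : (1 - q) * (1 - 2/(n:ℝ)) ≤ 1 - 2/(n:ℝ) :=
      mul_le_of_le_one_left hr2_0 (by linarith)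
    linarith
  have hD2 : (0:ℝ) < 1 - (1 - p) * (1 - 1/(n:ℝ)) := by
    have h1 : (1 - p) * (1 - 1/(n:ℝ)) ≤ 1 - 1/(n:ℝ) :=
      mul_le_of_le_one_left hr1_0 (by linarith)
    have : (0:ℝ) < 1/(n:ℝ) := by positivity
    linarith
  have hD3 : (0:ℝ) < 2 + q * ((n:ℝ) - 2) := by
    have : (0:ℝ) ≤ q * ((n:ℝ) - 2) := by
      apply mul_nonneg (le_of_lt hq0)
      have : (2:ℝ) ≤ (n:ℝ) := by exact_mod_cast hn
      linarith
    linarith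
  have hD4 : (0:ℝ) < 1 + p * ((n:ℝ) - 1) := by
    have : (0:ℝ) ≤ p * ((n:ℝ) - 1) := by
      apply mul_nonneg (le_of_lt hp0)
      have : (1:ℝ) ≤ (n:ℝ) := by exact_mod_cast hn0
      linarith
    linarith
  have hA : q * (1 - 2/(n:ℝ)) / (1 - (1 - q) * (1 - 2/(n:ℝ)))
      = q * ((n:ℝ) - 2) / (2 + q * ((n:ℝ) - 2)) := by
    rw [div_eq_div_iff (ne_of_gt hD1) (ne_of_gt hD3)]
    field_simp
    ring
  have hB : p * (1 - 1/(n:ℝ)) / (1 - (1 - p) * (1 - 1/(n:ℝ)))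
      = p * ((n:ℝ) - 1) / (1 + p * ((n:ℝ) - 1)) := by
    rw [div_eq_div_iff (ne_of_gt hD2) (ne_of_gt hD4)]
    field_simp
    ring
  rw [hA, hB]
  field_simp
  ring
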